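/- Let (K; ψ) be a topological system with quasi-discrete spectrum such that dim fix(T) = 1 and the group H_1 of unimodular eigenvalues of T is torsion-free. Then for every x ∈ K and every quasi-eigenvector f ∈ G \ G_1 (i.e., a non-constant unimodular quasi-eigenvector), the Cesàro averages (1/N)∑_{j=0}^{N-1}(T^j f)(x) converge to 0 as N → ∞. -/

import Mathlib

open Filter Finset Complex

/-- Tail bound for shifted partial sums. -/
lemma shift_sum_bound (u : ℕ → ℂ) (hu : ∀ j, ‖u j‖ ≤ 1) (s N : ℕ) :
    ‖(∑ j ∈ range N, u (j + s)) - ∑ j ∈ range N, u j‖ ≤ 2 * s := by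
  have h1 : ∑ j ∈ range N, u (j + s) = ∑ j ∈ Finset.Ico s (N + s), u j := by
    rw [Finset.sum_Ico_eq_sum_range]
    simp [add_comm, Nat.add_sub_cancel]
  have h2 : (∑ j ∈ Finset.Ico 0 N, u j) + ∑ j ∈ Finset.Ico N (N + s), u j
      = ∑ j ∈ Finset.Ico 0 (N + s), u j :=
    Finset.sum_Ico_consecutive _ (Nat.zero_le _) (Nat.le_add_right _ _)
  have h3 : (∑ j ∈ Finset.Ico 0 s, u j) + ∑ j ∈ Finset.Ico s (N + s), u j
      = ∑ j ∈ Finset.Ico 0 (N + s), u j :=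
    Finset.sum_Ico_consecutive _ (Nat.zero_le _) (Nat.le_add_left _ _)
  have key : (∑ j ∈ Finset.Ico s (N + s), u j) - ∑ j ∈ range N, u j
      = (∑ j ∈ Finset.Ico N (N + s), u j) - ∑ j ∈ Finset.Ico 0 s, u j := by
    rw [← Nat.Ico_zero_eq_range]; linear_combination h3 - h2
  have bnd : ∀ a b : ℕ, ‖∑ j ∈ Finset.Ico a b, u j‖ ≤ (b - a : ℕ) := by
    intro a b
    calc ‖∑ j ∈ Finset.Ico a b, u j‖ ≤ ∑ j ∈ Finset.Ico a b, ‖u j‖ := norm_sum_le _ _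
    _ ≤ ∑ _j ∈ Finset.Ico a b, 1 := Finset.sum_le_sum fun j _ => hu j
    _ = ((b - a : ℕ) : ℝ) := by simp [Nat.card_Ico]
  rw [h1, key]
  calc ‖(∑ j ∈ Finset.Ico N (N + s), u j) - ∑ j ∈ Finset.Ico 0 s, u j‖
      ≤ ‖∑ j ∈ Finset.Ico N (N + s), u j‖ + ‖∑ j ∈ Finset.Ico 0 s, u j‖ := norm_sub_le _ _
    _ ≤ ((N + s - N : ℕ) : ℝ) + ((s - 0 : ℕ) : ℝ) := add_le_add (bnd _ _) (bnd _ _)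
    _ ≤ 2 * s := by simp; ring_nf; simp

lemma norm_cesaro (z : ℕ → ℂ) (N : ℕ) : ‖(N : ℂ)⁻¹ * z N‖ = (N : ℝ)⁻¹ * ‖z N‖ := by
  rw [norm_mul, norm_inv, Complex.norm_natCast]

lemma inv_mul_tendsto (C : ℝ) : Tendsto (fun N : ℕ => (N : ℝ)⁻¹ * C) atTop (nhds 0) := by
  simpa using (tendsto_inv_atTop_nhds_zero_nat).mul_const C

lemma cesaro_shift (u : ℕ → ℂ) (hu : ∀ j, ‖u j‖ ≤ 1) (s : ℕ)
    (h : Tendsto (fun N : ℕ => (N : ℂ)⁻¹ * ∑ j ∈ range N, u j) atTop (nhds 0)) :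
    Tendsto (fun N : ℕ => (N : ℂ)⁻¹ * ∑ j ∈ range N, u (j + s)) atTop (nhds 0) := by
  have key : ∀ N : ℕ, (N : ℂ)⁻¹ * ∑ j ∈ range N, u (j + s)
      = (N : ℂ)⁻¹ * ∑ j ∈ range N, u j
        + (N : ℂ)⁻¹ * ((∑ j ∈ range N, u (j + s)) - ∑ j ∈ range N, u j) := by
    intro N; ring
  have h2 : Tendsto (fun N : ℕ =>
      (N : ℂ)⁻¹ * ((∑ j ∈ range N, u (j + s)) - ∑ j ∈ range N, u j)) atTop (nhds 0) := by
    refine squeeze_zero_norm (fun N => ?_) (inv_mul_tendsto (2 * s))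
    rw [norm_mul, norm_inv, Complex.norm_natCast]
    exact mul_le_mul_of_nonneg_left (shift_sum_bound u hu s N) (by positivity)
  simpa [← key] using h.add h2

/-- off-diagonal correlation Cesàro averages vanish -/
lemma offdiag_tendsto (u : ℕ → ℂ) (hu : ∀ j, ‖u j‖ ≤ 1)
    (hc : ∀ s : ℕ, 1 ≤ s → Tendsto (fun N : ℕ => (N : ℂ)⁻¹ *
        ∑ j ∈ range N, u (j + s) * starRingEnd ℂ (u j)) atTop (nhds 0))
    (h h' : ℕ) (hne : h ≠ h') :
    Tendsto (fun N : ℕ => (N : ℝ)⁻¹ *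
      ‖∑ j ∈ range N, u (j + h) * starRingEnd ℂ (u (j + h'))‖) atTop (nhds 0) := by
  -- reduce to the case h' < h using conjugation symmetry
  have key : ∀ a b : ℕ, b < a → Tendsto (fun N : ℕ => (N : ℝ)⁻¹ *
      ‖∑ j ∈ range N, u (j + a) * starRingEnd ℂ (u (j + b))‖) atTop (nhds 0) := by
    intro a b hba
    set w : ℕ → ℂ := fun j => u (j + (a - b)) * starRingEnd ℂ (u j) with hw
    have hwb : ∀ j, ‖w j‖ ≤ 1 := by
      intro j
      calc ‖w j‖ = ‖u (j + (a - b))‖ * ‖u j‖ := by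
            rw [hw]; simp [norm_mul]
        _ ≤ 1 * 1 := mul_le_mul (hu _) (hu _) (norm_nonneg _) zero_le_one
        _ = 1 := one_mul 1
    have h1 : Tendsto (fun N : ℕ => (N : ℂ)⁻¹ * ∑ j ∈ range N, w j) atTop (nhds 0) :=
      hc (a - b) (by omega)
    have h2 := cesaro_shift w hwb b h1
    have h3 : ∀ j : ℕ, w (j + b) = u (j + a) * starRingEnd ℂ (u (j + b)) := by
      intro j
      have hjj : j + b + (a - b) = j + a := by omega
      rw [hw]; simp only [hjj]
    have h4 : Tendsto (fun N : ℕ => (N : ℂ)⁻¹ *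
        ∑ j ∈ range N, u (j + a) * starRingEnd ℂ (u (j + b))) atTop (nhds 0) := by
      simpa [h3] using h2
    have := h4.norm
    simpa [norm_mul, norm_inv, Complex.norm_natCast] using this
  rcases Nat.lt_or_ge h' h with hlt | hge
  · exact key h h' hlt
  · have hlt : h < h' := by omega
    have := key h' h hlt
    have heq : ∀ N : ℕ, ‖∑ j ∈ range N, u (j + h) * starRingEnd ℂ (u (j + h'))‖
        = ‖∑ j ∈ range N, u (j + h') * starRingEnd ℂ (u (j + h))‖ := by
      intro N
      have : (∑ j ∈ range N, u (j + h) * starRingEnd ℂ (u (j + h')))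
          = starRingEnd ℂ (∑ j ∈ range N, u (j + h') * starRingEnd ℂ (u (j + h))) := by
        rw [map_sum]
        refine Finset.sum_congr rfl fun j _ => ?_
        simp [mul_comm]
      rw [this, RCLike.norm_conj]
    simpa [heq] using this

/-- van der Corput lemma (qualitative form). -/
lemma vdc (u : ℕ → ℂ) (hu : ∀ j, ‖u j‖ ≤ 1)
    (hc : ∀ s : ℕ, 1 ≤ s → Tendsto (fun N : ℕ => (N : ℂ)⁻¹ *
        ∑ j ∈ range N, u (j + s) * starRingEnd ℂ (u j)) atTop (nhds 0)) :
    Tendsto (fun N : ℕ => (N : ℂ)⁻¹ * ∑ j ∈ range N, u j) atTop (nhds 0) := by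
  rw [NormedAddCommGroup.tendsto_nhds_zero]
  intro ε hε
  -- choose H
  obtain ⟨H, hH1, hHε⟩ : ∃ H : ℕ, 1 ≤ (H : ℝ) ∧ 8 ≤ ε ^ 2 * H := by
    refine ⟨max 1 ⌈8 / ε ^ 2⌉₊, ?_, ?_⟩
    · simp [Nat.one_le_cast]
    · have h1 : (8 / ε ^ 2 : ℝ) ≤ (⌈8 / ε ^ 2⌉₊ : ℝ) := Nat.le_ceil _
      have h2 : ((⌈8 / ε ^ 2⌉₊ : ℕ) : ℝ) ≤ ((max 1 ⌈8 / ε ^ 2⌉₊ : ℕ) : ℝ) := by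
        exact_mod_cast Nat.le_max_right 1 _
      have hε2 : (0:ℝ) < ε ^ 2 := by positivity
      rw [div_le_iff₀ hε2] at h1
      nlinarith
  set v : ℕ → ℂ := fun j => ∑ h ∈ range H, u (j + h) with hv
  set P : ℕ → ℕ → ℕ → ℂ := fun h h' N => ∑ j ∈ range N, u (j + h) * starRingEnd ℂ (u (j + h'))
    with hP
  set R : ℕ → ℝ := fun N => ∑ h ∈ range H, ∑ h' ∈ range H,
    (if h = h' then 0 else (N : ℝ)⁻¹ * ‖P h h' N‖) with hR
  -- Fact A
  have factA : ∀ N : ℕ, ‖(H : ℂ) * (∑ j ∈ range N, u j) - ∑ j ∈ range N, v j‖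
      ≤ 2 * H ^ 2 := by
    intro N
    have hswap : (∑ j ∈ range N, v j) = ∑ h ∈ range H, ∑ j ∈ range N, u (j + h) := by
      rw [hv]; exact Finset.sum_comm
    have hconst : (H : ℂ) * (∑ j ∈ range N, u j)
        = ∑ _h ∈ range H, ∑ j ∈ range N, u j := by
      simp [Finset.sum_const, nsmul_eq_mul]
    rw [hswap, hconst, ← Finset.sum_sub_distrib]
    calc ‖∑ h ∈ range H, ((∑ j ∈ range N, u j) - ∑ j ∈ range N, u (j + h))‖
        ≤ ∑ h ∈ range H, ‖(∑ j ∈ range N, u j) - ∑ j ∈ range N, u (j + h)‖ :=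
          norm_sum_le _ _
      _ ≤ ∑ h ∈ range H, 2 * (h : ℝ) := by
          refine Finset.sum_le_sum fun h _ => ?_
          rw [norm_sub_rev]
          exact shift_sum_bound u hu h N
      _ ≤ ∑ _h ∈ range H, 2 * (H : ℝ) := by
          refine Finset.sum_le_sum fun h hh => ?_
          have : (h : ℝ) ≤ H := by exact_mod_cast (Finset.mem_range.1 hh).le
          linarith
      _ = 2 * (H:ℝ)^2 := by rw [Finset.sum_const]; simp [Finset.card_range]; ring
  -- Fact BCD
  have factB : ∀ N : ℕ, ‖∑ j ∈ range N, v j‖ ^ 2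
      ≤ (N : ℝ) * ((H : ℝ) * N + (N : ℝ) * R N) := by
    intro N
    have b1 : ‖∑ j ∈ range N, v j‖ ^ 2 ≤ (∑ j ∈ range N, ‖v j‖) ^ 2 := by
      have := norm_sum_le (range N) v
      nlinarith [norm_nonneg (∑ j ∈ range N, v j), Finset.sum_nonneg
        (fun j (_ : j ∈ range N) => norm_nonneg (v j))]
    have b2 : (∑ j ∈ range N, ‖v j‖) ^ 2 ≤ (N : ℝ) * ∑ j ∈ range N, ‖v j‖ ^ 2 := by
      have := sq_sum_le_card_mul_sum_sq (s := range N) (f := fun j => ‖v j‖)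
      simpa [Finset.card_range] using this
    have b3 : (∑ j ∈ range N, ‖v j‖ ^ 2) = (∑ j ∈ range N, v j * starRingEnd ℂ (v j)).re := by
      rw [Complex.re_sum]
      refine Finset.sum_congr rfl fun j _ => ?_
      rw [Complex.mul_conj]
      rw [Complex.normSq_eq_norm_sq, Complex.ofReal_re]
    have b4 : (∑ j ∈ range N, v j * starRingEnd ℂ (v j)).re
        ≤ ‖∑ j ∈ range N, v j * starRingEnd ℂ (v j)‖ := Complex.re_le_norm _
    have b5 : (∑ j ∈ range N, v j * starRingEnd ℂ (v j))
        = ∑ h ∈ range H, ∑ h' ∈ range H, P h h' N := by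
      have e1 : ∀ j, v j * starRingEnd ℂ (v j)
          = ∑ h ∈ range H, ∑ h' ∈ range H, u (j + h) * starRingEnd ℂ (u (j + h')) := by
        intro j
        rw [hv]
        simp only [map_sum]
        rw [Finset.sum_mul_sum]
      rw [Finset.sum_congr rfl fun j _ => e1 j]
      rw [Finset.sum_comm]
      refine Finset.sum_congr rfl fun h _ => Finset.sum_comm
    have b6 : ‖∑ h ∈ range H, ∑ h' ∈ range H, P h h' N‖
        ≤ (H : ℝ) * N + (N : ℝ) * R N := by
      calc ‖∑ h ∈ range H, ∑ h' ∈ range H, P h h' N‖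
          ≤ ∑ h ∈ range H, ∑ h' ∈ range H, ‖P h h' N‖ := by
            refine le_trans (norm_sum_le _ _) (Finset.sum_le_sum fun h _ => norm_sum_le _ _)
        _ ≤ ∑ h ∈ range H, ∑ h' ∈ range H,
            ((if h = h' then (N:ℝ) else 0) + (if h = h' then 0 else ‖P h h' N‖)) := by
            refine Finset.sum_le_sum fun h _ => Finset.sum_le_sum fun h' _ => ?_
            by_cases hhh : h = h'
            · subst hhh
              rw [if_pos rfl, if_pos rfl, add_zero]
              calc ‖P h h N‖ ≤ ∑ j ∈ range N, ‖u (j + h) * starRingEnd ℂ (u (j + h))‖ :=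
                    norm_sum_le _ _
                _ ≤ ∑ _j ∈ range N, 1 := by
                    refine Finset.sum_le_sum fun j _ => ?_
                    rw [norm_mul, RCLike.norm_conj]
                    exact mul_le_one₀ (hu _) (norm_nonneg _) (hu _)
                _ = (N : ℝ) := by simp
            · simp [hhh]
        _ = (H : ℝ) * N + (N : ℝ) * R N := by
            rw [Finset.sum_congr rfl fun h _ => Finset.sum_add_distrib, Finset.sum_add_distrib]
            congr 1
            · rw [Finset.sum_congr rfl fun h hh =>
                (Finset.sum_ite_eq (range H) h fun _ => (N:ℝ)) ]
              rw [Finset.sum_congr rfl fun h hh => if_pos hh]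
              simp [mul_comm]
            · rw [hR]
              rcases Nat.eq_zero_or_pos N with rfl | hN
              · simp [hP]
              have hN0 : ((N:ℝ)) ≠ 0 := by positivity
              simp only [Finset.mul_sum]
              refine Finset.sum_congr rfl fun h _ => Finset.sum_congr rfl fun h' _ => ?_
              by_cases hh : h = h'
              · simp [hh]
              · rw [if_neg hh, if_neg hh, ← mul_assoc, mul_inv_cancel₀ hN0, one_mul]
    calc ‖∑ j ∈ range N, v j‖ ^ 2 ≤ (∑ j ∈ range N, ‖v j‖) ^ 2 := b1
      _ ≤ (N : ℝ) * ∑ j ∈ range N, ‖v j‖ ^ 2 := b2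
      _ ≤ (N : ℝ) * ((H : ℝ) * N + (N : ℝ) * R N) := by
          refine mul_le_mul_of_nonneg_left ?_ (Nat.cast_nonneg N)
          rw [b3] at *
          exact le_trans b4 (by rw [b5]; exact b6)
  have hRt : Tendsto R atTop (nhds 0) := by
    have hterm : ∀ h h', Tendsto
        (fun N : ℕ => if h = h' then (0:ℝ) else (N:ℝ)⁻¹ * ‖P h h' N‖) atTop (nhds 0) := by
      intro h h'
      by_cases hh : h = h'
      · simp only [hh, if_pos rfl]; exact tendsto_const_nhds
      · simpa [hh] using offdiag_tendsto u hu hc h h' hh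
    have := tendsto_finset_sum (range H) (fun h (_ : h ∈ range H) =>
      tendsto_finset_sum (range H) (fun h' (_ : h' ∈ range H) => hterm h h'))
    simpa [hR] using this
  have hev1 : ∀ᶠ N : ℕ in atTop, R N < 1 := hRt.eventually_lt_const one_pos
  have hev2 : ∀ᶠ N : ℕ in atTop, 4 * (H:ℝ) < ε * N := by
    have h1 : Tendsto (fun N : ℕ => ε * (N:ℝ)) atTop atTop :=
      (tendsto_natCast_atTop_atTop).const_mul_atTop hε
    exact h1.eventually_gt_atTop _
  filter_upwards [hev1, hev2] with N hr hN
  have hN0 : (0:ℝ) < N := by nlinarith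
  set a := ‖∑ j ∈ range N, u j‖ with ha
  set dd := ‖∑ j ∈ range N, v j‖ with hdd
  have hA : (H:ℝ) * a ≤ dd + 2*(H:ℝ)^2 := by
    have h1 := factA N
    have h2 : ‖(H : ℂ) * (∑ j ∈ range N, u j)‖ - dd
        ≤ ‖(H : ℂ) * (∑ j ∈ range N, u j) - ∑ j ∈ range N, v j‖ := norm_sub_norm_le _ _
    rw [norm_mul, Complex.norm_natCast] at h2
    linarith
  have hB : dd^2 ≤ (N:ℝ)^2 * ((H:ℝ)+1) := by
    have := factB N
    nlinarith [this, sq_nonneg dd]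
  have hd2 : 2 * dd ≤ ε * H * N := by
    have h0 : (0:ℝ) ≤ ε * H * N := by positivity
    refine le_of_pow_le_pow_left₀ two_ne_zero h0 ?_
    have e1 : 8 * (H:ℝ) ≤ ε^2 * (H:ℝ)^2 := by nlinarith
    have e2 : 4*((H:ℝ)+1) ≤ 8*(H:ℝ) := by nlinarith
    calc (2*dd)^2 = 4*dd^2 := by ring
      _ ≤ 4*((N:ℝ)^2*((H:ℝ)+1)) := by linarith
      _ ≤ ε^2*(H:ℝ)^2*(N:ℝ)^2 := by nlinarith [sq_nonneg ((N:ℝ))]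
      _ = (ε*(H:ℝ)*(N:ℝ))^2 := by ring
  have key : (H:ℝ) * a < (H:ℝ) * (ε * N) := by nlinarith
  have haN : a < ε * N := lt_of_mul_lt_mul_left key (by positivity)
  have heq : ‖(N : ℂ)⁻¹ * ∑ j ∈ range N, u j‖ = (N:ℝ)⁻¹ * a := by
    rw [norm_mul, norm_inv, Complex.norm_natCast]
  rw [heq, inv_mul_lt_iff₀ hN0]
  linarith [haN]

lemma prod_Ico_Ico_comm' {M : Type*} [CommMonoid M] (a b : ℕ) (f : ℕ → ℕ → M) :
    (∏ i ∈ Finset.Ico a b, ∏ j ∈ Finset.Ico (i + 1) b, f i j) =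
      ∏ j ∈ Finset.Ico a b, ∏ i ∈ Finset.Ico a j, f i j := by
  rw [Finset.prod_sigma', Finset.prod_sigma']
  refine Finset.prod_nbij' (fun x => ⟨x.2, x.1⟩) (fun x => ⟨x.2, x.1⟩) ?_ ?_ (fun _ _ => rfl)
    (fun _ _ => rfl) (fun _ _ => rfl) <;>
  simp only [Finset.mem_Ico, Sigma.forall, Finset.mem_sigma] <;>
  rintro a b ⟨⟨h₁, h₂⟩, ⟨h₃, h₄⟩⟩ <;>
  omega

/-- Weyl-type equidistribution for binomial exponential products. -/
lemma weyl_binom : ∀ d : ℕ, 1 ≤ d → ∀ z : ℕ → ℂ, (∀ k, ‖z k‖ = 1) →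
    (∀ m : ℕ, 1 ≤ m → z d ^ m ≠ 1) →
    Tendsto (fun N : ℕ => (N : ℂ)⁻¹ * ∑ j ∈ range N, ∏ k ∈ range (d+1), z k ^ (j.choose k))
      atTop (nhds 0) := by
  intro d
  induction d using Nat.strong_induction_on with
  | _ d ih =>
  intro hd z hz1 hzd
  have hzne : ∀ k, z k ≠ 0 := by
    intro k h0
    have := hz1 k
    rw [h0, norm_zero] at this
    norm_num at this
  rcases Nat.lt_or_ge d 2 with hd2 | hd2
  · -- base case d = 1
    have hd1 : d = 1 := by omega
    subst hd1
    have hz : z 1 ≠ 1 := by simpa using hzd 1 le_rfl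
    have hc0 : 0 < ‖z 1 - 1‖ := by
      rw [norm_pos_iff]
      exact sub_ne_zero.2 hz
    have key : ∀ N : ℕ, ∑ j ∈ range N, ∏ k ∈ range 2, z k ^ (j.choose k)
        = z 0 * ((z 1 ^ N - 1) / (z 1 - 1)) := by
      intro N
      rw [← geom_sum_eq hz, Finset.mul_sum]
      refine Finset.sum_congr rfl fun j _ => ?_
      rw [Finset.prod_range_succ, Finset.prod_range_one]
      simp [Nat.choose_one_right]
    refine squeeze_zero_norm (fun N => ?_) (inv_mul_tendsto (2 / ‖z 1 - 1‖))
    rw [key, norm_mul, norm_inv, Complex.norm_natCast]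
    refine mul_le_mul_of_nonneg_left ?_ (by positivity)
    rw [norm_mul, hz1 0, one_mul, norm_div]
    have hnum : ‖z 1 ^ N - 1‖ ≤ 2 := by
      calc ‖z 1 ^ N - 1‖ ≤ ‖z 1 ^ N‖ + ‖(1:ℂ)‖ := norm_sub_le _ _
        _ = 2 := by rw [norm_pow, hz1, one_pow, norm_one]; norm_num
    gcongr
  · -- inductive step : d ≥ 2
    set u : ℕ → ℂ := fun j => ∏ k ∈ range (d+1), z k ^ (j.choose k) with hu
    have hun : ∀ j, ‖u j‖ = 1 := by
      intro j
      rw [hu]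
      simp only
      rw [norm_prod]
      exact Finset.prod_eq_one fun k _ => by rw [norm_pow, hz1, one_pow]
    refine vdc u (fun j => (hun j).le) ?_
    intro s hs
    set w : ℕ → ℂ := fun i => ∏ k ∈ Finset.Ico (i+1) (d+1), z k ^ (s.choose (k - i)) with hw
    have hwn : ∀ i, ‖w i‖ = 1 := by
      intro i
      rw [hw]
      simp only
      rw [norm_prod]
      exact Finset.prod_eq_one fun k _ => by rw [norm_pow, hz1, one_pow]
    have hwm : w (d - 1) = z d ^ s := by
      have h1 : d - 1 + 1 = d := by omega
      rw [hw]
      simp only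
      rw [h1, Nat.Ico_succ_singleton, Finset.prod_singleton]
      have h2 : d - (d - 1) = 1 := by omega
      rw [h2, Nat.choose_one_right]
    have hconj : ∀ k, starRingEnd ℂ (z k) = (z k)⁻¹ := by
      intro k
      have h1 : z k * starRingEnd ℂ (z k) = 1 := by
        rw [Complex.mul_conj, Complex.normSq_eq_norm_sq, hz1 k]
        norm_num
      exact (inv_eq_of_mul_eq_one_right h1).symm
    have claim : ∀ j : ℕ, u (j + s) * starRingEnd ℂ (u j)
        = ∏ i ∈ range d, w i ^ (j.choose i) := by
      intro j
      have hchoose : ∀ k, (j+s).choose k - j.choose k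
          = ∑ i ∈ range k, j.choose i * s.choose (k - i) := by
        intro k
        have hv := Nat.add_choose_eq j s k
        rw [Finset.Nat.sum_antidiagonal_eq_sum_range_succ_mk, Finset.sum_range_succ] at hv
        simp only [Nat.sub_self, Nat.choose_zero_right, mul_one] at hv
        omega
      have step1 : u (j + s) * starRingEnd ℂ (u j)
          = ∏ k ∈ range (d+1), z k ^ ((j+s).choose k - j.choose k) := by
        rw [hu]
        simp only
        rw [map_prod, ← Finset.prod_mul_distrib]
        refine Finset.prod_congr rfl fun k _ => ?_
        rw [map_pow, hconj k, inv_pow,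
          ← pow_sub₀ (z k) (hzne k) (Nat.choose_le_choose k (Nat.le_add_right j s))]
      rw [step1]
      have step2 : ∀ k, z k ^ ((j+s).choose k - j.choose k)
          = ∏ i ∈ range k, (z k ^ (s.choose (k - i))) ^ (j.choose i) := by
        intro k
        rw [hchoose k, ← Finset.prod_pow_eq_pow_sum]
        refine Finset.prod_congr rfl fun i _ => ?_
        rw [← pow_mul, mul_comm]
      rw [Finset.prod_congr rfl fun k _ => step2 k]
      have swap : ∏ k ∈ range (d+1), ∏ i ∈ range k, (z k ^ (s.choose (k - i))) ^ (j.choose i)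
          = ∏ i ∈ range (d+1), ∏ k ∈ Finset.Ico (i+1) (d+1),
              (z k ^ (s.choose (k - i))) ^ (j.choose i) := by
        have swap0 := prod_Ico_Ico_comm' 0 (d+1)
          (fun i k => (z k ^ (s.choose (k - i))) ^ (j.choose i))
        have conv1 : ∏ k ∈ range (d+1), ∏ i ∈ range k, (z k ^ (s.choose (k - i))) ^ (j.choose i)
            = ∏ k ∈ Finset.Ico 0 (d+1), ∏ i ∈ Finset.Ico 0 k,
                (z k ^ (s.choose (k - i))) ^ (j.choose i) := by
          simp [Nat.Ico_zero_eq_range]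
        rw [conv1, ← swap0, Nat.Ico_zero_eq_range]
      rw [swap]
      have step3 : ∀ i, ∏ k ∈ Finset.Ico (i+1) (d+1), (z k ^ (s.choose (k - i))) ^ (j.choose i)
          = w i ^ (j.choose i) := by
        intro i
        rw [hw]
        simp only
        rw [Finset.prod_pow]
      rw [Finset.prod_congr rfl fun i _ => step3 i]
      have hlast : w d = 1 := by
        rw [hw]; simp
      rw [Finset.prod_range_succ, hlast, one_pow, mul_one]
    have := ih (d-1) (by omega) (by omega) w hwn (by
      intro m hm
      rw [hwm, ← pow_mul]
      exact hzd (s * m) (Nat.one_le_iff_ne_zero.2 (Nat.mul_ne_zero (by omega) (by omega))))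
    have hd1 : d - 1 + 1 = d := by omega
    rw [hd1] at this
    simpa [claim] using this

/-- Hahn–Parry: for a topological system with quasi-discrete spectrum, with
`dim fix(T) = 1` and torsion-free group of unimodular eigenvalues, the Cesàro
averages of `T^j f` at every point tend to `0` for every quasi-eigenvector
`f ∈ G \ G₁`. -/
theorem stmt12 {K : Type*} [TopologicalSpace K] [CompactSpace K] [T2Space K]
    (ψ : C(K, K))
    (T : C(K, ℂ) → C(K, ℂ)) (hT : ∀ f, T f = f.comp ψ)
    (Λ : C(K, ℂ) → C(K, ℂ)) (hΛ : ∀ f, Λ f = f.comp ψ * star f)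
    (G : Set C(K, ℂ))
    (hG : G = {f | (∀ x, ‖f x‖ = 1) ∧ ∃ n : ℕ, Λ^[n] f = 1})
    (hqds : Dense (Submodule.span ℂ G : Set C(K, ℂ)))
    (hfix : ∀ f : C(K, ℂ), f.comp ψ = f → ∃ c : ℂ, f = ContinuousMap.const K c)
    (htf : ∀ f ∈ G, Λ (Λ f) = 1 → ∀ k : ℕ, 1 ≤ k → (Λ f) ^ k = 1 → Λ f = 1)
    (x : K) (f : C(K, ℂ)) (hfG : f ∈ G) (hf1 : Λ f ≠ 1) :
    Filter.Tendsto (fun N : ℕ => (N : ℂ)⁻¹ * ∑ j ∈ Finset.range N, (T^[j] f) x)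
      Filter.atTop (nhds 0) := by
  classical
  rw [hG] at hfG
  obtain ⟨hnorm, hex⟩ := hfG
  obtain ⟨n, hn, hmin⟩ : ∃ n, Λ^[n] f = 1 ∧ ∀ m, m < n → Λ^[m] f ≠ 1 :=
    ⟨Nat.find hex, Nat.find_spec hex, fun m hm => Nat.find_min hex hm⟩
  have hΛ1 : Λ (1 : C(K, ℂ)) = 1 := by
    rw [hΛ, ContinuousMap.one_comp]
    ext y
    simp
  have hn2 : 2 ≤ n := by
    by_contra hcon
    interval_cases n
    · exact hf1 (by rw [Function.iterate_zero_apply] at hn; rw [hn, hΛ1])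
    · exact hf1 (by rwa [Function.iterate_one] at hn)
  -- norms of iterates
  have hΛnorm : ∀ k y, ‖(Λ^[k] f) y‖ = 1 := by
    intro k
    induction k with
    | zero => exact hnorm
    | succ k ihk =>
      intro y
      rw [Function.iterate_succ_apply', hΛ]
      simp only [ContinuousMap.mul_apply, ContinuousMap.comp_apply, ContinuousMap.star_apply]
      rw [norm_mul, norm_star, ihk, ihk, mul_one]
  have hstar_mul : ∀ k, star (Λ^[k] f) * (Λ^[k] f) = 1 := by
    intro k
    ext y
    simp only [ContinuousMap.mul_apply, ContinuousMap.star_apply, ContinuousMap.one_apply]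
    rw [mul_comm, Complex.star_def, Complex.mul_conj, Complex.normSq_eq_norm_sq,
      hΛnorm k y]
    norm_num
  have hcompψ : ∀ k, (Λ^[k] f).comp ψ = Λ^[k+1] f * Λ^[k] f := by
    intro k
    have h1 : Λ^[k+1] f = (Λ^[k] f).comp ψ * star (Λ^[k] f) := by
      rw [Function.iterate_succ_apply', hΛ]
    calc (Λ^[k] f).comp ψ = (Λ^[k] f).comp ψ * (star (Λ^[k] f) * (Λ^[k] f)) := by
          rw [hstar_mul, mul_one]
      _ = Λ^[k+1] f * Λ^[k] f := by rw [h1, mul_assoc]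
  have hcompprod : ∀ (s : Finset ℕ) (F : ℕ → C(K, ℂ)),
      (∏ i ∈ s, F i).comp ψ = ∏ i ∈ s, (F i).comp ψ := by
    intro s F
    induction s using Finset.induction_on with
    | empty => simp [ContinuousMap.one_comp]
    | insert a s' hnotmem ih =>
                           rw [Finset.prod_insert hnotmem, Finset.prod_insert hnotmem,
                             ContinuousMap.mul_comp, ih]
  -- the key identity
  have hiter : ∀ j : ℕ, T^[j] f = ∏ k ∈ range n, (Λ^[k] f) ^ (j.choose k) := by
    intro j
    induction j with
    | zero =>
      rw [Function.iterate_zero_apply]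
      rw [Finset.prod_eq_single 0 (fun k _ hk =>
        by rw [Nat.choose_eq_zero_of_lt (Nat.pos_of_ne_zero hk), pow_zero])
        (fun h0 => absurd (Finset.mem_range.2 (by omega)) h0)]
      simp
    | succ j ihj =>
      rw [Function.iterate_succ_apply', ihj, hT, hcompprod]
      have hterm : ∀ k, ((Λ^[k] f) ^ (j.choose k)).comp ψ
          = (Λ^[k+1] f) ^ (j.choose k) * (Λ^[k] f) ^ (j.choose k) := by
        intro k
        rw [ContinuousMap.pow_comp, hcompψ, mul_pow]
      rw [Finset.prod_congr rfl fun k _ => hterm k, Finset.prod_mul_distrib]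
      obtain ⟨n', rfl⟩ : ∃ n', n = n' + 1 := ⟨n - 1, by omega⟩
      have hfn : Λ^[n' + 1] f = 1 := hn
      -- first factor
      have hA : ∏ k ∈ range (n' + 1), (Λ^[k+1] f) ^ (j.choose k)
          = ∏ k ∈ range n', (Λ^[k+1] f) ^ (j.choose k) := by
        rw [Finset.prod_range_succ, hfn, one_pow, mul_one]
      have hB : ∏ k ∈ range (n' + 1), (Λ^[k] f) ^ (j.choose k)
          = f * ∏ k ∈ range n', (Λ^[k+1] f) ^ (j.choose (k+1)) := by
        rw [Finset.prod_range_succ']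
        simp [mul_comm]
      have hR : ∏ k ∈ range (n' + 1), (Λ^[k] f) ^ ((j+1).choose k)
          = f * ∏ k ∈ range n', ((Λ^[k+1] f) ^ (j.choose k) * (Λ^[k+1] f) ^ (j.choose (k+1))) := by
        rw [Finset.prod_range_succ']
        simp only [Nat.choose_zero_right, pow_one, Function.iterate_zero_apply]
        rw [mul_comm]
        congr 1
        refine Finset.prod_congr rfl fun k _ => ?_
        rw [Nat.choose_succ_succ, pow_add]
      rw [hA, hB, hR, Finset.prod_mul_distrib]
      ring
  -- the constant c
  have hfixn : (Λ^[n-1] f).comp ψ = Λ^[n-1] f := by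
    have h1 : Λ^[(n-1)+1] f = 1 := by rw [show n-1+1 = n by omega]; exact hn
    rw [hcompψ (n-1), h1, one_mul]
  obtain ⟨c, hc⟩ := hfix _ hfixn
  have hcx : (Λ^[n-1] f) x = c := by rw [hc]; rfl
  have hcroot : ∀ m, 1 ≤ m → c ^ m ≠ 1 := by
    intro m hm hcm
    have hgG : Λ^[n-2] f ∈ G := by
      rw [hG]
      refine ⟨hΛnorm (n-2), ⟨2, ?_⟩⟩
      rw [← Function.iterate_add_apply, show 2 + (n-2) = n by omega]
      exact hn
    have hΛg : Λ (Λ^[n-2] f) = Λ^[n-1] f := by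
      rw [← Function.iterate_succ_apply' Λ (n-2) f, show (n-2).succ = n-1 by omega]
    have hΛΛg : Λ (Λ (Λ^[n-2] f)) = 1 := by
      rw [hΛg, ← Function.iterate_succ_apply' Λ (n-1) f, show (n-1).succ = n by omega]
      exact hn
    have hpow : (Λ (Λ^[n-2] f)) ^ m = 1 := by
      rw [hΛg, hc]
      ext y
      simp [hcm]
    have := htf _ hgG hΛΛg m hm hpow
    exact hmin (n-1) (by omega) (by rw [← hΛg]; exact this)
  -- conclude
  set z : ℕ → ℂ := fun k => (Λ^[k] f) x with hz
  have happ : ∀ j, (T^[j] f) x = ∏ k ∈ range n, z k ^ (j.choose k) := by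
    intro j
    rw [hiter j, ContinuousMap.prod_apply]
    rfl
  have main := weyl_binom (n-1) (by omega) z (fun k => hΛnorm k x)
    (by intro m hm; rw [show z (n-1) = c from hcx]; exact hcroot m hm)
  rw [show n-1+1 = n by omega] at main
  simpa [happ] using main
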